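/- Fix D ≥ 1, ε > 0 and δ₁ > δ₂ > ⋯ > δ_D > 0 with δ₁ < ε. For 1 ≤ i ≤ D and z ∈ V_{D−i+1}, define the domain A_{i,z} ⊆ ℝ^D by A_{1,z} := H_z^{δ₁} and, for i ≥ 2, A_{i,z} := convex hull of H_z^{δ_i} ∪ H_z^{δ_{i−1}}. Then the closures of all these domains are pairwise disjoint: if (i, z) ≠ (j, w) with 1 ≤ i, j ≤ D, z ∈ V_{D−i+1}, w ∈ V_{D−j+1}, then closure(A_{i,z}) ∩ closure(A_{j,w}) = ∅. -/
import Mathlib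


/-- `r` is a half-integer: `r = n/2` with `n` an odd integer. -/
def IsHalfInt (r : ℝ) : Prop := ∃ n : ℤ, Odd n ∧ r = (n : ℝ) / 2

/-- `V_j`: the set of points of `ℝ^D` having exactly `j` integer coordinates, the
remaining `D - j` coordinates being half-integers. -/
def VsetJ (D j : ℕ) : Set (Fin D → ℝ) :=
  {z | ∃ S : Finset (Fin D), S.card = j ∧ (∀ k ∈ S, ∃ m : ℤ, z k = (m : ℝ)) ∧
       ∀ k ∉ S, IsHalfInt (z k)}

/-- The open box `H_z^δ`: coordinates with `z_k ∈ ℤ` are within `(ε-δ)/2` of `ε z_k`,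
coordinates with `z_k` a half-integer are within `δ/4` of `ε z_k`. -/
def Hcube (D : ℕ) (ε δ : ℝ) (z : Fin D → ℝ) : Set (Fin D → ℝ) :=
  {a | ∀ k, ((∃ m : ℤ, z k = (m : ℝ)) → |a k - ε * z k| < (ε - δ) / 2) ∧
            (IsHalfInt (z k) → |a k - ε * z k| < δ / 4)}

/-- The domain `A_{i,z}`: for `i = 1` the cube `H_z^{δ₁}`, and for `i ≥ 2` the convex
hull of `H_z^{δ_i} ∪ H_z^{δ_{i-1}}`. -/
def domA (D : ℕ) (ε : ℝ) (δ : ℕ → ℝ) (i : ℕ) (z : Fin D → ℝ) : Set (Fin D → ℝ) :=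
  if i = 1 then Hcube D ε (δ 1) z
  else convexHull ℝ (Hcube D ε (δ i) z ∪ Hcube D ε (δ (i - 1)) z)

/-- A closed convex superset of `domA`. -/
def Kset (D : ℕ) (ε α β : ℝ) (z : Fin D → ℝ) : Set (Fin D → ℝ) :=
  {a | ∀ k, ((∃ m : ℤ, z k = (m : ℝ)) → |a k - ε * z k| ≤ (ε - α) / 2) ∧
            (IsHalfInt (z k) → |a k - ε * z k| ≤ β / 4) ∧
            (∀ l, (∃ m : ℤ, z k = (m : ℝ)) → IsHalfInt (z l) →
              2 * |a k - ε * z k| + 4 * |a l - ε * z l| ≤ ε)}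

lemma cond_closed {X : Type*} [TopologicalSpace X] (P : Prop) (s : Set X) (hs : IsClosed s) :
    IsClosed {a | P → a ∈ s} := by
  by_cases hP : P
  · simpa [hP] using hs
  · simp [hP]

lemma Kset_closed (D : ℕ) (ε α β : ℝ) (z : Fin D → ℝ) : IsClosed (Kset D ε α β z) := by
  have h1 : ∀ (k : Fin D) (c r : ℝ), IsClosed {a : Fin D → ℝ | |a k - c| ≤ r} :=
    fun k c r => isClosed_le (((continuous_apply k).sub continuous_const).abs) continuous_const
  have h2 : ∀ (k l : Fin D) (c d : ℝ),
      IsClosed {a : Fin D → ℝ | 2 * |a k - c| + 4 * |a l - d| ≤ ε} :=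
    fun k l c d => isClosed_le
      ((continuous_const.mul (((continuous_apply k).sub continuous_const).abs)).add
        (continuous_const.mul (((continuous_apply l).sub continuous_const).abs)))
      continuous_const
  have heq : Kset D ε α β z =
      ⋂ k, ({a : Fin D → ℝ | (∃ m : ℤ, z k = (m : ℝ)) →
              a ∈ {a : Fin D → ℝ | |a k - ε * z k| ≤ (ε - α) / 2}} ∩
            ({a : Fin D → ℝ | IsHalfInt (z k) →
              a ∈ {a : Fin D → ℝ | |a k - ε * z k| ≤ β / 4}} ∩
             ⋂ l, {a : Fin D → ℝ | (∃ m : ℤ, z k = (m : ℝ)) →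
               a ∈ {a : Fin D → ℝ | IsHalfInt (z l) →
                 a ∈ {a : Fin D → ℝ | 2 * |a k - ε * z k| + 4 * |a l - ε * z l| ≤ ε}}})) := by
    ext a
    simp only [Kset, Set.mem_iInter, Set.mem_inter_iff, Set.mem_setOf_eq]
  rw [heq]
  refine isClosed_iInter fun k => (cond_closed _ _ (h1 k _ _)).inter
    ((cond_closed _ _ (h1 k _ _)).inter (isClosed_iInter fun l =>
      cond_closed _ _ (cond_closed _ _ (h2 k l _ _))))

lemma Kset_convex (D : ℕ) (ε α β : ℝ) (z : Fin D → ℝ) : Convex ℝ (Kset D ε α β z) := by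
  intro x hx y hy s t hs ht hst
  have key : ∀ (k : Fin D),
      |(s • x + t • y) k - ε * z k| ≤ s * |x k - ε * z k| + t * |y k - ε * z k| := by
    intro k
    have h : (s • x + t • y) k - ε * z k = s * (x k - ε * z k) + t * (y k - ε * z k) := by
      simp only [Pi.add_apply, Pi.smul_apply, smul_eq_mul]
      linear_combination (ε * z k) * hst
    rw [h]
    calc |s * (x k - ε * z k) + t * (y k - ε * z k)|
        ≤ |s * (x k - ε * z k)| + |t * (y k - ε * z k)| := abs_add_le _ _
      _ = s * |x k - ε * z k| + t * |y k - ε * z k| := by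
          rw [abs_mul, abs_mul, abs_of_nonneg hs, abs_of_nonneg ht]
  intro k
  refine ⟨fun hk => ?_, fun hk => ?_, fun l hk hl => ?_⟩
  · have hA := ((hx k).1 hk); have hB := ((hy k).1 hk)
    calc |(s • x + t • y) k - ε * z k| ≤ s * |x k - ε * z k| + t * |y k - ε * z k| := key k
      _ ≤ s * ((ε - α) / 2) + t * ((ε - α) / 2) := by
          gcongr
      _ = (ε - α) / 2 := by rw [← add_mul, hst, one_mul]
  · have hA := ((hx k).2.1 hk); have hB := ((hy k).2.1 hk)
    calc |(s • x + t • y) k - ε * z k| ≤ s * |x k - ε * z k| + t * |y k - ε * z k| := key k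
      _ ≤ s * (β / 4) + t * (β / 4) := by gcongr
      _ = β / 4 := by rw [← add_mul, hst, one_mul]
  · have hA := ((hx k).2.2 l hk hl); have hB := ((hy k).2.2 l hk hl)
    have hkk := key k; have hll := key l
    have e1 : s * (2 * |x k - ε * z k| + 4 * |x l - ε * z l|) ≤ s * ε :=
      mul_le_mul_of_nonneg_left hA hs
    have e2 : t * (2 * |y k - ε * z k| + 4 * |y l - ε * z l|) ≤ t * ε :=
      mul_le_mul_of_nonneg_left hB ht
    have e3 : s * ε + t * ε = ε := by rw [← add_mul, hst, one_mul]
    nlinarith [hkk, hll]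

lemma Hcube_subset_Kset (D : ℕ) (ε α β s : ℝ) (z : Fin D → ℝ) (h1 : α ≤ s) (h2 : s ≤ β) :
    Hcube D ε s z ⊆ Kset D ε α β z := by
  intro a ha k
  refine ⟨fun hk => ?_, fun hk => ?_, fun l hk hl => ?_⟩
  · have := (ha k).1 hk; linarith
  · have := (ha k).2 hk; linarith
  · have h3 := (ha k).1 hk; have h4 := (ha l).2 hl; linarith

lemma closure_domA_subset (D : ℕ) (ε : ℝ) (δ : ℕ → ℝ) (i : ℕ) (z : Fin D → ℝ)
    (hle : i ≠ 1 → δ i ≤ δ (i - 1)) :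
    closure (domA D ε δ i z) ⊆
      Kset D ε (δ i) (if i = 1 then δ 1 else δ (i - 1)) z := by
  apply closure_minimal _ (Kset_closed D ε _ _ z)
  unfold domA
  split_ifs with h
  · subst h
    exact Hcube_subset_Kset D ε _ _ _ z le_rfl le_rfl
  · exact convexHull_min (Set.union_subset
      (Hcube_subset_Kset D ε _ _ _ z le_rfl (hle h))
      (Hcube_subset_Kset D ε _ _ _ z (hle h) le_rfl)) (Kset_convex D ε _ _ z)

lemma sep_int_int {x y : ℝ} (hx : ∃ m : ℤ, x = (m : ℝ)) (hy : ∃ m : ℤ, y = (m : ℝ))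
    (h : x ≠ y) : 1 ≤ |x - y| := by
  obtain ⟨m, rfl⟩ := hx; obtain ⟨n, rfl⟩ := hy
  have hmn : m - n ≠ 0 := by
    intro h'; apply h; have : m = n := by omega
    rw [this]
  have h1 : (1 : ℤ) ≤ |m - n| := Int.one_le_abs hmn
  have : ((1 : ℤ) : ℝ) ≤ |((m - n : ℤ) : ℝ)| := by
    rw [← Int.cast_abs]; exact_mod_cast h1
  simpa using this

lemma sep_int_half {x y : ℝ} (hx : ∃ m : ℤ, x = (m : ℝ)) (hy : IsHalfInt y) :
    1 / 2 ≤ |x - y| := by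
  obtain ⟨m, rfl⟩ := hx; obtain ⟨n, hn, rfl⟩ := hy
  obtain ⟨c, hc⟩ := hn
  have h : (2 * m - n) ≠ 0 := by omega
  have h1 : (1 : ℤ) ≤ |2 * m - n| := Int.one_le_abs h
  have h2 : (m : ℝ) - n / 2 = ((2 * m - n : ℤ) : ℝ) / 2 := by push_cast; ring
  have h3 : ((1 : ℤ) : ℝ) ≤ |((2 * m - n : ℤ) : ℝ)| := by
    rw [← Int.cast_abs]; exact_mod_cast h1
  rw [h2, abs_div, abs_two]
  push_cast at h3 ⊢
  linarith

lemma sep_half_half {x y : ℝ} (hx : IsHalfInt x) (hy : IsHalfInt y) (h : x ≠ y) :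
    1 ≤ |x - y| := by
  obtain ⟨n, hn, rfl⟩ := hx; obtain ⟨n', hn', rfl⟩ := hy
  obtain ⟨c, hc⟩ := hn; obtain ⟨c', hc'⟩ := hn'
  have hne : n ≠ n' := by
    intro h'; apply h; rw [h']
  have h2 : (2 : ℤ) ≤ |n - n'| := by
    have heq : n - n' = 2 * (c - c') := by omega
    rw [heq, abs_mul, abs_two]
    have : (1 : ℤ) ≤ |c - c'| := Int.one_le_abs (by omega)
    linarith
  have h3 : ((2 : ℤ) : ℝ) ≤ |((n - n' : ℤ) : ℝ)| := by
    rw [← Int.cast_abs]; exact_mod_cast h2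
  have h4 : (n : ℝ) / 2 - n' / 2 = ((n - n' : ℤ) : ℝ) / 2 := by push_cast; ring
  rw [h4, abs_div, abs_two]
  push_cast at h3 ⊢
  linarith

/-- Lemma 5.3: for `ε > δ₁ > δ₂ > ⋯ > δ_D > 0`, the closures of all the domains
`A_{i,z}` (`1 ≤ i ≤ D`, `z ∈ V_{D-i+1}`) are pairwise disjoint. -/
theorem geometric_scheme_domains_disjoint (D : ℕ) (hD : 1 ≤ D) (ε : ℝ) (hε : 0 < ε)
    (δ : ℕ → ℝ) (hpos : ∀ i, 1 ≤ i → i ≤ D → 0 < δ i)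
    (hanti : ∀ i j, 1 ≤ i → i < j → j ≤ D → δ j < δ i) (hδ₁ε : δ 1 < ε)
    (i j : ℕ) (hi1 : 1 ≤ i) (hiD : i ≤ D) (hj1 : 1 ≤ j) (hjD : j ≤ D)
    (z w : Fin D → ℝ) (hz : z ∈ VsetJ D (D - i + 1)) (hw : w ∈ VsetJ D (D - j + 1))
    (hne : ¬(i = j ∧ z = w)) :
    closure (domA D ε δ i z) ∩ closure (domA D ε δ j w) = ∅ := by
  have hmono : ∀ m n, 1 ≤ m → m ≤ n → n ≤ D → δ n ≤ δ m := by
    intro m n hm hmn hn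
    rcases eq_or_lt_of_le hmn with h | h
    · rw [h]
    · exact le_of_lt (hanti m n hm h hn)
  rw [Set.eq_empty_iff_forall_notMem]
  rintro a ⟨ha1, ha2⟩
  set βi : ℝ := if i = 1 then δ 1 else δ (i - 1) with hβi
  set βj : ℝ := if j = 1 then δ 1 else δ (j - 1) with hβj
  have hKz : a ∈ Kset D ε (δ i) βi z :=
    closure_domA_subset D ε δ i z
      (fun h => hmono (i - 1) i (by omega) (by omega) hiD) ha1
  have hKw : a ∈ Kset D ε (δ j) βj w :=
    closure_domA_subset D ε δ j w
      (fun h => hmono (j - 1) j (by omega) (by omega) hjD) ha2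
  have hβi1 : βi ≤ δ 1 := by
    rw [hβi]; split_ifs with h
    · exact le_rfl
    · exact hmono 1 (i - 1) le_rfl (by omega) (by omega)
  have hβj1 : βj ≤ δ 1 := by
    rw [hβj]; split_ifs with h
    · exact le_rfl
    · exact hmono 1 (j - 1) le_rfl (by omega) (by omega)
  have hδi : 0 < δ i := hpos i hi1 hiD
  have hδj : 0 < δ j := hpos j hj1 hjD
  obtain ⟨S, hScard, hSint, hShalf⟩ := hz
  obtain ⟨T, hTcard, hTint, hThalf⟩ := hw
  -- helper : scaled separation
  have habs : ∀ k : Fin D,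
      ε * |z k - w k| ≤ |a k - ε * z k| + |a k - ε * w k| := by
    intro k
    have h1 : |ε * z k - ε * w k| ≤ |ε * z k - a k| + |a k - ε * w k| := abs_sub_le _ _ _
    have h2 : |ε * z k - ε * w k| = ε * |z k - w k| := by
      rw [show ε * z k - ε * w k = ε * (z k - w k) from by ring, abs_mul, abs_of_pos hε]
    have h3 : |ε * z k - a k| = |a k - ε * z k| := abs_sub_comm _ _
    linarith
  by_cases hST : S = T
  · -- same integer-coordinate sets: i = j, and z = w forced, contradicting hne
    have hcards : D - i + 1 = D - j + 1 := by rw [← hScard, ← hTcard, hST]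
    have hij : i = j := by omega
    apply hne
    refine ⟨hij, funext fun k => ?_⟩
    by_cases hk : k ∈ S
    · by_contra hzw
      have hzi := hSint k hk
      have hwi := hTint k (hST ▸ hk)
      have hsep : 1 ≤ |z k - w k| := sep_int_int hzi hwi hzw
      have h1 := (hKz k).1 hzi
      have h2 := (hKw k).1 hwi
      have h3 := habs k
      nlinarith
    · by_contra hzw
      have hzh := hShalf k hk
      have hwh := hThalf k (fun h => hk (hST ▸ h))
      have hsep : 1 ≤ |z k - w k| := sep_half_half hzh hwh hzw
      have h1 := (hKz k).2.1 hzh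
      have h2 := (hKw k).2.1 hwh
      have h3 := habs k
      nlinarith
  · -- different integer-coordinate sets
    by_cases hSsub : ∃ k, k ∈ S ∧ k ∉ T
    · obtain ⟨k, hkS, hkT⟩ := hSsub
      have hzk := hSint k hkS
      have hwk := hThalf k hkT
      have hsepk : 1 / 2 ≤ |z k - w k| := sep_int_half hzk hwk
      have hpk := (hKz k).1 hzk
      have huk := (hKw k).2.1 hwk
      have htri := habs k
      by_cases hTsub : ∃ l, l ∈ T ∧ l ∉ S
      · -- both differences nonempty: iterate the mixed inequality
        obtain ⟨l, hlT, hlS⟩ := hTsub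
        have hwl := hTint l hlT
        have hzl := hShalf l hlS
        have hsepl : 1 / 2 ≤ |z l - w l| := by
          have := sep_int_half hwl hzl
          calc (1:ℝ)/2 ≤ |w l - z l| := this
            _ = |z l - w l| := abs_sub_comm _ _
        have hql := (hKw l).1 hwl
        have hmixz := (hKz k).2.2 l hzk hzl
        have hmixw := (hKw l).2.2 k hwl hwk
        have htril := habs l
        have hsk : ε / 2 ≤ |a k - ε * z k| + |a k - ε * w k| := by nlinarith
        have hsl : ε / 2 ≤ |a l - ε * z l| + |a l - ε * w l| := by nlinarith
        have h0k := abs_nonneg (a k - ε * w k)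
        have h0l := abs_nonneg (a l - ε * z l)
        linarith
      · -- T ⊂ S : then i < j and a direct contradiction at coordinate k
        push_neg at hTsub
        have hTS : T ⊆ S := fun l hl => hTsub l hl
        have hcard : T.card < S.card :=
          Finset.card_lt_card (hTS.ssubset_of_ne (fun h => hST h.symm))
        have hij : i < j := by omega
        have hj2 : j ≠ 1 := by omega
        have hβjval : βj = δ (j - 1) := by rw [hβj, if_neg hj2]
        have hβji : βj ≤ δ i := by
          rw [hβjval]; exact hmono i (j - 1) hi1 (by omega) (by omega)
        have hsk : ε / 2 ≤ |a k - ε * z k| + |a k - ε * w k| := by nlinarith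
        linarith
    · -- S ⊂ T : symmetric
      push_neg at hSsub
      have hST' : S ⊆ T := fun l hl => hSsub l hl
      have hcard : S.card < T.card :=
        Finset.card_lt_card (hST'.ssubset_of_ne hST)
      have hij : j < i := by omega
      obtain ⟨k, hkT, hkS⟩ := Finset.exists_of_ssubset (hST'.ssubset_of_ne hST)
      have hwk := hTint k hkT
      have hzk := hShalf k hkS
      have hsepk : 1 / 2 ≤ |z k - w k| := by
        have := sep_int_half hwk hzk
        calc (1:ℝ)/2 ≤ |w k - z k| := this
          _ = |z k - w k| := abs_sub_comm _ _
      have hqk := (hKw k).1 hwk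
      have huk := (hKz k).2.1 hzk
      have htri := habs k
      have hi2 : i ≠ 1 := by omega
      have hβival : βi = δ (i - 1) := by rw [hβi, if_neg hi2]
      have hβij : βi ≤ δ j := by
        rw [hβival]; exact hmono j (i - 1) hj1 (by omega) (by omega)
      have hsk : ε / 2 ≤ |a k - ε * z k| + |a k - ε * w k| := by nlinarith
      linarith
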